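/- Let a' ∈ ℂ be nonzero and q ∈ (0,1) satisfy |a'| − q²(2−q)/(1−q)² > 0. Let {c_k}_{k≥1} be deterministic complex numbers with |c_k| ≤ k for all k ≥ 2 and |c₁| < r, where r := |a'|/q − q(2−q)/(1−q)². Then the function φ(z) = a' − Σ_{k≥1} c_k z^k has no zeros in the closed disk of radius q: indeed, by Rouché's theorem φ has the same number of zeros in D(0,q) as g(z) = a' − c₁ z, which is zero. -/

import Mathlib

open Metric

/-- If `|a'| − q²(2−q)/(1−q)² > 0`, `|c_k| ≤ k` for `k ≥ 2` and `|c₁| < r` with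
`r = |a'|/q − q(2−q)/(1−q)²`, then `φ(z) = a' − Σ_{k≥1} c_k z^k` has no zeros in the
closed disk of radius `q`. -/
theorem stmt13 (a' : ℂ) (ha' : a' ≠ 0) (q : ℝ) (hq0 : 0 < q) (hq1 : q < 1)
    (hqa : 0 < ‖a'‖ - q ^ 2 * (2 - q) / (1 - q) ^ 2)
    (c : ℕ → ℂ) (hck : ∀ k : ℕ, 2 ≤ k → ‖c k‖ ≤ k)
    (r : ℝ) (hr : r = ‖a'‖ / q - q * (2 - q) / (1 - q) ^ 2)
    (hc1 : ‖c 1‖ < r) :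
    ∀ z ∈ closedBall (0 : ℂ) q,
      a' - ∑' k : ℕ, c (k + 1) * z ^ (k + 1) ≠ 0 := by
  intro z hz
  have hzq : ‖z‖ ≤ q := by simpa using hz
  have hq0' : (0:ℝ) ≤ q := hq0.le
  have hqlt : ‖q‖ < 1 := by rw [Real.norm_eq_abs, abs_of_nonneg hq0']; exact hq1
  set f : ℕ → ℂ := fun k => c (k + 1) * z ^ (k + 1) with hf
  -- geometric series facts
  have hSsum : Summable (fun n : ℕ => (n : ℝ) * q ^ n) := by
    have := summable_pow_mul_geometric_of_norm_lt_one (k := 1) (r := q) hqlt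
    simpa using this
  have hS : ∑' n : ℕ, (n : ℝ) * q ^ n = q / (1 - q) ^ 2 :=
    tsum_coe_mul_geometric_of_norm_lt_one hqlt
  have hS1sum : Summable (fun n : ℕ => ((n:ℝ) + 1) * q ^ (n + 1)) := by
    have := (summable_nat_add_iff 1).mpr hSsum
    simpa using this
  have hS2sum : Summable (fun n : ℕ => ((n:ℝ) + 2) * q ^ (n + 2)) := by
    have := (summable_nat_add_iff 2).mpr hSsum
    simpa using this
  have hS1 : ∑' n : ℕ, ((n:ℝ) + 1) * q ^ (n + 1) = q / (1 - q) ^ 2 := by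
    have h0 := Summable.tsum_eq_zero_add hSsum
    simp only [Nat.cast_zero, zero_mul, pow_zero, zero_add, Nat.cast_add, Nat.cast_one] at h0
    rw [← hS, h0]
  have hS2 : ∑' n : ℕ, ((n:ℝ) + 2) * q ^ (n + 2) = q / (1 - q) ^ 2 - q := by
    have h0 := Summable.tsum_eq_zero_add hS1sum
    simp only [Nat.cast_zero, zero_add, pow_one, Nat.cast_add, Nat.cast_one] at h0
    rw [hS1] at h0
    have : ∀ n : ℕ, ((n:ℝ) + 1 + 1) * q ^ (n + 1 + 1) = ((n:ℝ) + 2) * q ^ (n + 2) := by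
      intro n; ring_nf
    rw [tsum_congr this] at h0
    linarith
  -- bound on the tail terms
  have htail : ∀ k : ℕ, ‖f (k + 1)‖ ≤ ((k:ℝ) + 2) * q ^ (k + 2) := by
    intro k
    have h1 : ‖c (k + 2)‖ ≤ (k:ℝ) + 2 := by
      have := hck (k + 2) (by omega)
      push_cast at this ⊢
      linarith
    have h2 : ‖z ^ (k + 2)‖ ≤ q ^ (k + 2) := by
      rw [norm_pow]; exact pow_le_pow_left₀ (norm_nonneg z) hzq _
    calc ‖f (k + 1)‖ = ‖c (k + 2)‖ * ‖z ^ (k + 2)‖ := by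
          simp [hf, map_mul]
      _ ≤ ((k:ℝ) + 2) * q ^ (k + 2) :=
          mul_le_mul h1 h2 (norm_nonneg _) (by positivity)
  have hfsum : Summable f := by
    rw [← summable_nat_add_iff 1]
    exact hS2sum.of_norm_bounded htail
  have hnsum : Summable (fun k => ‖f k‖) := by
    rw [← summable_nat_add_iff 1]
    exact hS2sum.of_nonneg_of_le (fun _ => norm_nonneg _) htail
  have hbound : ‖∑' k, f k‖ ≤ ‖c 1‖ * q + (q / (1 - q) ^ 2 - q) := by
    calc ‖∑' k, f k‖ ≤ ∑' k, ‖f k‖ := norm_tsum_le_tsum_norm hnsum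
      _ = ‖f 0‖ + ∑' k, ‖f (k + 1)‖ := Summable.tsum_eq_zero_add hnsum
      _ ≤ ‖c 1‖ * q + ∑' k : ℕ, ((k:ℝ) + 2) * q ^ (k + 2) := by
          gcongr
          · calc ‖f 0‖ = ‖c 1‖ * ‖z‖ := by
                  simp [hf, map_mul]
              _ ≤ ‖c 1‖ * q :=
                  mul_le_mul_of_nonneg_left hzq (norm_nonneg _)
          · exact (summable_nat_add_iff 1).mpr hnsum
          · exact htail _
      _ = ‖c 1‖ * q + (q / (1 - q) ^ 2 - q) := by rw [hS2]
  -- the key strict inequality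
  have hkey : ‖c 1‖ * q + (q / (1 - q) ^ 2 - q) < ‖a'‖ := by
    have h1q : (0:ℝ) < (1 - q) ^ 2 := pow_pos (by linarith) 2
    have hrq : r * q = ‖a'‖ - q ^ 2 * (2 - q) / (1 - q) ^ 2 := by
      rw [hr]; field_simp
    have hlt : ‖c 1‖ * q < r * q := by
      exact mul_lt_mul_of_pos_right hc1 hq0
    have heq : q / (1 - q) ^ 2 - q = q ^ 2 * (2 - q) / (1 - q) ^ 2 := by
      rw [eq_div_iff h1q.ne', sub_mul, div_mul_cancel₀ _ h1q.ne']; ring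
    rw [heq]; rw [hrq] at hlt; linarith
  intro h
  have : a' = ∑' k, f k := by
    rw [sub_eq_zero] at h; exact h
  rw [this] at hkey
  exact absurd hbound (not_le.mpr hkey)
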